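/- Let M be a finitely generated module over a commutative Noetherian ring, p an associated prime of M, and let N = ker(M → M_p) be the kernel of the localization map. Then the associated primes of M/N are exactly the associated primes of M that are contained in p, and the associated primes of N are the remaining associated primes of M. -/

import Mathlib

/-- Let `p` be an associated prime of `M` and `N` the kernel of the localization map
`M → M_p`. Then the associated primes of `M/N` are exactly the associated primes of
`M` contained in `p`, and those of `N` are the remaining ones. -/
theorem stmt_12 {R M : Type*} [CommRing R] [IsNoetherianRing R]
    [AddCommGroup M] [Module R M] [Module.Finite R M]
    (p : Ideal R) (hp : p.IsPrime) (hass : p ∈ associatedPrimes R M)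
    (N : Submodule R M)
    (hN : N = LinearMap.ker (LocalizedModule.mkLinearMap p.primeCompl M)) :
    associatedPrimes R (M ⧸ N) = {q ∈ associatedPrimes R M | q ≤ p} ∧
    associatedPrimes R N = associatedPrimes R M \ {q | q ≤ p} := by
  -- membership criterion for N
  have hmem : ∀ x : M, x ∈ N ↔ ∃ s : p.primeCompl, (s : R) • x = 0 := by
    intro x
    rw [hN, LinearMap.mem_ker, LocalizedModule.mkLinearMap_apply]
    rw [show (0 : LocalizedModule p.primeCompl M) = LocalizedModule.mk 0 1 from
      (LocalizedModule.zero_mk _).symm, LocalizedModule.mk_eq]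
    constructor
    · rintro ⟨u, hu⟩
      exact ⟨u, by simpa [Submonoid.smul_def] using hu⟩
    · rintro ⟨u, hu⟩
      exact ⟨u, by simpa [Submonoid.smul_def] using hu⟩
  -- there is a single s₀ ∉ p killing all of N
  have : IsNoetherian R M := inferInstance
  obtain ⟨S, hS⟩ := (IsNoetherian.noetherian N)
  choose f hf using fun x : M => (hmem x).1
  obtain ⟨s₀, hs₀⟩ : ∃ s₀ : p.primeCompl, ∀ x ∈ N, (s₀ : R) • x = 0 := by
    classical
    refine ⟨∏ x ∈ S.attach, if hx : (x : M) ∈ N then f (x : M) hx else 1, ?_⟩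
    have hle : Submodule.span R (S : Set M) ≤ Submodule.torsionBy R M
        ((∏ x ∈ S.attach, if hx : (x : M) ∈ N then f (x : M) hx else 1 : p.primeCompl) : R) := by
      rw [Submodule.span_le]
      intro y hy
      rw [SetLike.mem_coe, Submodule.mem_torsionBy_iff]
      have hyN : y ∈ N := hS ▸ Submodule.subset_span hy
      have : (∏ x ∈ S.attach, if hx : (x : M) ∈ N then f (x : M) hx else 1 : p.primeCompl)
          = (if hy' : ((⟨y, hy⟩ : S) : M) ∈ N then f y hy' else 1) *
            ∏ x ∈ S.attach.erase ⟨y, hy⟩,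
              (if hx : (x : M) ∈ N then f (x : M) hx else 1) := by
        rw [← Finset.mul_prod_erase _ _ (Finset.mem_attach S ⟨y, hy⟩)]
      rw [this]
      push_cast
      rw [mul_comm, mul_smul]
      simp [dif_pos hyN, hf y hyN]
    intro x hx
    exact Submodule.mem_torsionBy_iff _ _ |>.1 ((hS ▸ hle) hx)
  have hs₀p : (s₀ : R) ∉ p := s₀.2
  constructor
  · -- Ass(M/N) = {q ∈ Ass M | q ≤ p}
    ext q
    simp only [Set.mem_setOf_eq]
    constructor
    · intro hA
      obtain ⟨hq, xbar, hxbar⟩ := (isAssociatedPrime_iff (I := q) (M := M ⧸ N)).1 hA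
      rw [Submodule.bot_colon'] at hxbar
      obtain ⟨x, rfl⟩ := Submodule.Quotient.mk_surjective N xbar
      -- q ≤ p
      have hqp : q ≤ p := by
        intro r hr
        by_contra hrp
        have hrx : r • x ∈ N := by
          have h1 : r ∈ (R ∙ Submodule.Quotient.mk (p := N) x).annihilator := hxbar ▸ hr
          rw [Submodule.mem_annihilator_span_singleton, ← Submodule.Quotient.mk_smul,
            Submodule.Quotient.mk_eq_zero] at h1
          exact h1
        obtain ⟨t, ht⟩ := (hmem _).1 hrx
        have : x ∈ N := (hmem x).2 ⟨t * ⟨r, hrp⟩, by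
          push_cast; rw [mul_smul]; exact ht⟩
        have hx0 : (Submodule.Quotient.mk (p := N) x) = 0 :=
          (Submodule.Quotient.mk_eq_zero N).2 this
        have : (1 : R) ∈ q := by
          rw [hxbar, Submodule.mem_annihilator_span_singleton, hx0, smul_zero]
        exact hq.ne_top (Ideal.eq_top_iff_one q |>.2 this)
      refine ⟨(isAssociatedPrime_iff (I := q) (M := M)).2 ⟨hq, s₀ • x, ?_⟩, hqp⟩
      -- q is the annihilator of s₀ • x in M
      rw [Submodule.bot_colon']
      ext r
      rw [Submodule.mem_annihilator_span_singleton]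
      constructor
      · intro hr
        have : r ∈ (R ∙ Submodule.Quotient.mk (p := N) x).annihilator := hxbar ▸ hr
        rw [Submodule.mem_annihilator_span_singleton, ← Submodule.Quotient.mk_smul,
          Submodule.Quotient.mk_eq_zero] at this
        rw [smul_comm]
        exact hs₀ _ this
      · intro hr
        have : (r * (s₀ : R)) • x = 0 := by rw [mul_smul]; exact hr
        have hmq : r * (s₀ : R) ∈ q := by
          rw [hxbar, Submodule.mem_annihilator_span_singleton, ← Submodule.Quotient.mk_smul,
            this, Submodule.Quotient.mk_zero]
        rcases hq.mul_mem_iff_mem_or_mem.1 hmq with h | h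
        · exact h
        · exact absurd (hqp h) hs₀p
    · rintro ⟨hA, hqp⟩
      obtain ⟨hq, x, hx⟩ := (isAssociatedPrime_iff (I := q) (M := M)).1 hA
      rw [Submodule.bot_colon'] at hx
      refine (isAssociatedPrime_iff (I := q) (M := M ⧸ N)).2 ⟨hq, Submodule.Quotient.mk x, ?_⟩
      rw [Submodule.bot_colon']
      ext r
      rw [Submodule.mem_annihilator_span_singleton, ← Submodule.Quotient.mk_smul,
        Submodule.Quotient.mk_eq_zero]
      constructor
      · intro hr
        have : r • x = 0 := by
          have := hx ▸ hr
          rwa [Submodule.mem_annihilator_span_singleton] at this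
        rw [this]; exact N.zero_mem
      · intro hr
        obtain ⟨t, ht⟩ := (hmem _).1 hr
        have : (t : R) * r ∈ q := by
          rw [hx, Submodule.mem_annihilator_span_singleton, mul_smul]; exact ht
        rcases hq.mul_mem_iff_mem_or_mem.1 this with h | h
        · exact absurd (hqp h) t.2
        · exact h
  · -- Ass(N) = Ass M \ {q ≤ p}
    ext q
    simp only [Set.mem_diff, Set.mem_setOf_eq]
    constructor
    · intro hA
      obtain ⟨hq, x, hx⟩ := (isAssociatedPrime_iff (I := q) (M := N)).1 hA
      rw [Submodule.bot_colon'] at hx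
      obtain ⟨t, ht⟩ := (hmem (x : M)).1 x.2
      have htq : (t : R) ∈ q := by
        rw [hx, Submodule.mem_annihilator_span_singleton]
        exact Subtype.ext ht
      refine ⟨IsAssociatedPrime.map_of_injective (f := N.subtype) hA
        N.injective_subtype, fun hle => t.2 (hle htq)⟩
    · rintro ⟨hA, hqp⟩
      obtain ⟨hq, x, hx⟩ := (isAssociatedPrime_iff (I := q) (M := M)).1 hA
      rw [Submodule.bot_colon'] at hx
      obtain ⟨s, hsq0, hsp⟩ := Set.not_subset.1 hqp
      have hsq : s ∈ q := hsq0
      have hsx : s • x = 0 := by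
        have := hx ▸ hsq
        rwa [Submodule.mem_annihilator_span_singleton] at this
      have hxN : x ∈ N := (hmem x).2 ⟨⟨s, hsp⟩, hsx⟩
      refine (isAssociatedPrime_iff (I := q) (M := N)).2 ⟨hq, ⟨x, hxN⟩, ?_⟩
      rw [Submodule.bot_colon']
      ext r
      rw [Submodule.mem_annihilator_span_singleton, hx,
        Submodule.mem_annihilator_span_singleton]
      constructor
      · intro hr; exact Subtype.ext hr
      · intro hr; exact congrArg Subtype.val hr
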